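/- Let K be an algebraically closed field of characteristic zero. For all but finitely many t ∈ K, the set of points of ℙ³(K) that do not lie on the line l₃ = {x = y = 0} and at which at least four of the eight linear forms P₁ = x, P₂ = y, P₃ = x + y, P₄ = z, P₅ = x + 2y + z + t·v, P₆ = v, P₇ = y + z + v, P₈ = x + y + z + (t − 1)·v vanish has exactly six elements. Thus for generic t the arrangement has exactly six fourfold points not lying on the triple line l₃. -/

import Mathlib

/-- The eight linear forms `P₁ = x`, `P₂ = y`, `P₃ = x + y`, `P₄ = z`,
`P₅ = x + 2y + z + t·v`, `P₆ = v`, `P₇ = y + z + v`, `P₈ = x + y + z + (t − 1)·v`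
on `K⁴` defining the octic arrangement of the double octic family `X_t`. -/
def octicForms (K : Type*) [Field K] (t : K) : Fin 8 → ((Fin 4 → K) → K) :=
  ![fun w => w 0,
    fun w => w 1,
    fun w => w 0 + w 1,
    fun w => w 2,
    fun w => w 0 + 2 * w 1 + w 2 + t * w 3,
    fun w => w 3,
    fun w => w 1 + w 2 + w 3,
    fun w => w 0 + w 1 + w 2 + (t - 1) * w 3]

section Aux

variable {K : Type*} [Field K] {t : K}

lemma oF0 (w : Fin 4 → K) : octicForms K t 0 w = w 0 := rfl
lemma oF1 (w : Fin 4 → K) : octicForms K t 1 w = w 1 := rfl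
lemma oF2 (w : Fin 4 → K) : octicForms K t 2 w = w 0 + w 1 := rfl
lemma oF3 (w : Fin 4 → K) : octicForms K t 3 w = w 2 := rfl
lemma oF4 (w : Fin 4 → K) : octicForms K t 4 w = w 0 + 2 * w 1 + w 2 + t * w 3 := rfl
lemma oF5 (w : Fin 4 → K) : octicForms K t 5 w = w 3 := rfl
lemma oF6 (w : Fin 4 → K) : octicForms K t 6 w = w 1 + w 2 + w 3 := rfl
lemma oF7 (w : Fin 4 → K) : octicForms K t 7 w = w 0 + w 1 + w 2 + (t - 1) * w 3 := rfl

lemma octic_smul (i : Fin 8) (c : K) (q : Fin 4 → K) :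
    octicForms K t i (c • q) = c * octicForms K t i q := by
  fin_cases i
  · show c * q 0 = c * q 0; rfl
  · show c * q 1 = c * q 1; rfl
  · show c * q 0 + c * q 1 = c * (q 0 + q 1); ring
  · show c * q 2 = c * q 2; rfl
  · show c * q 0 + 2 * (c * q 1) + c * q 2 + t * (c * q 3) =
      c * (q 0 + 2 * q 1 + q 2 + t * q 3); ring
  · show c * q 3 = c * q 3; rfl
  · show c * q 1 + c * q 2 + c * q 3 = c * (q 1 + q 2 + q 3); ring
  · show c * q 0 + c * q 1 + c * q 2 + (t - 1) * (c * q 3) =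
      c * (q 0 + q 1 + q 2 + (t - 1) * q 3); ring

end Aux

set_option maxRecDepth 10000 in
lemma boolkey : ∀ f : Fin 8 → Bool,
    4 ≤ (Finset.univ.filter (fun i => f i = true)).card →
    ¬(f 0 = true ∧ f 1 = true) → ¬(f 0 = true ∧ f 2 = true) → ¬(f 1 = true ∧ f 2 = true) →
    ((f 3 = true ∧ f 4 = true ∧ f 6 = true) ∨
     (f 3 = true ∧ f 4 = true ∧ f 7 = true) ∨
     (f 3 = true ∧ f 5 = true ∧ f 6 = true) ∨
     (f 3 = true ∧ f 5 = true ∧ f 7 = true) ∨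
     (f 3 = true ∧ f 6 = true ∧ f 7 = true) ∨
     (f 4 = true ∧ f 5 = true ∧ f 6 = true) ∨
     (f 4 = true ∧ f 5 = true ∧ f 7 = true) ∨
     (f 4 = true ∧ f 6 = true ∧ f 7 = true) ∨
     (f 5 = true ∧ f 6 = true ∧ f 7 = true) ∨
     (f 3 = true ∧ f 4 = true ∧ f 5 = true ∧ (f 0 = true ∨ f 1 = true ∨ f 2 = true))) := by
  decide

lemma octic_forward {K : Type*} [Field K] [CharZero K] {t : K} {w : Fin 4 → K}
    (hl3 : ¬(w 0 = 0 ∧ w 1 = 0))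
    (h4 : 4 ≤ {i : Fin 8 | octicForms K t i w = 0}.ncard) :
    ∃ c : K, c ≠ 0 ∧
      (w = c • ![0, 1, -1, 0] ∨ w = c • ![1, -1, 0, 0] ∨ w = c • ![1, -1, 1, 0] ∨
       w = c • ![1, 0, -1, 0] ∨ w = c • ![1, 0, 0, 0] ∨ w = c • ![t - 2, 1, 0, -1]) := by
  classical
  have hcard : 4 ≤ (Finset.univ.filter
      (fun i => decide (octicForms K t i w = 0) = true)).card := by
    have hEq : {i : Fin 8 | octicForms K t i w = 0} =
        ↑(Finset.univ.filter (fun i => decide (octicForms K t i w = 0) = true)) := by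
      ext i; simp
    rwa [hEq, Set.ncard_coe_finset] at h4
  have key := boolkey (fun i => decide (octicForms K t i w = 0)) hcard
    (by simp only [decide_eq_true_eq]; simp only [oF0, oF1]; exact hl3)
    (by simp only [decide_eq_true_eq]; simp only [oF0, oF2]
        rintro ⟨h0, h2⟩; exact hl3 ⟨h0, by linear_combination h2 - h0⟩)
    (by simp only [decide_eq_true_eq]; simp only [oF1, oF2]
        rintro ⟨h1, h2⟩; exact hl3 ⟨by linear_combination h2 - h1, h1⟩)
  simp only [decide_eq_true_eq] at key; simp only [oF0, oF1, oF2, oF3, oF4, oF5, oF6, oF7] at key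
  rcases key with ⟨e3, e4, e6⟩ | ⟨e3, e4, e7⟩ | ⟨e3, e5, e6⟩ | ⟨e3, e5, e7⟩ |
    ⟨e3, e6, e7⟩ | ⟨e4, e5, e6⟩ | ⟨e4, e5, e7⟩ | ⟨e4, e6, e7⟩ | ⟨e5, e6, e7⟩ |
    ⟨e3, e4, e5, hx⟩
  · -- (3,4,6) → q6
    have hb : w 1 ≠ 0 := fun hb0 =>
      hl3 ⟨by linear_combination e4 - t * e6 + (t - 1) * e3 + (t - 2) * hb0, hb0⟩
    refine ⟨w 1, hb, Or.inr <| Or.inr <| Or.inr <| Or.inr <| Or.inr <| funext fun i => ?_⟩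
    fin_cases i
    · show w 0 = w 1 * (t - 2); linear_combination e4 - t * e6 + (t - 1) * e3
    · show w 1 = w 1 * 1; ring
    · show w 2 = w 1 * 0; linear_combination e3
    · show w 3 = w 1 * (-1); linear_combination e6 - e3
  · -- (3,4,7) → q6
    have hb : w 1 ≠ 0 := fun hb0 =>
      hl3 ⟨by linear_combination t * e7 - (t - 1) * e4 - e3 + (t - 2) * hb0, hb0⟩
    refine ⟨w 1, hb, Or.inr <| Or.inr <| Or.inr <| Or.inr <| Or.inr <| funext fun i => ?_⟩
    fin_cases i
    · show w 0 = w 1 * (t - 2); linear_combination t * e7 - (t - 1) * e4 - e3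
    · show w 1 = w 1 * 1; ring
    · show w 2 = w 1 * 0; linear_combination e3
    · show w 3 = w 1 * (-1); linear_combination e4 - e7
  · -- (3,5,6) → q5
    have hb : w 1 = 0 := by linear_combination e6 - e3 - e5
    have ha : w 0 ≠ 0 := fun ha0 => hl3 ⟨ha0, hb⟩
    refine ⟨w 0, ha, Or.inr <| Or.inr <| Or.inr <| Or.inr <| Or.inl <| funext fun i => ?_⟩
    fin_cases i
    · show w 0 = w 0 * 1; ring
    · show w 1 = w 0 * 0; linear_combination e6 - e3 - e5
    · show w 2 = w 0 * 0; linear_combination e3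
    · show w 3 = w 0 * 0; linear_combination e5
  · -- (3,5,7) → q2
    have ha : w 0 ≠ 0 := fun ha0 =>
      hl3 ⟨ha0, by linear_combination e7 - e3 - (t - 1) * e5 - ha0⟩
    refine ⟨w 0, ha, Or.inr <| Or.inl <| funext fun i => ?_⟩
    fin_cases i
    · show w 0 = w 0 * 1; ring
    · show w 1 = w 0 * (-1); linear_combination e7 - e3 - (t - 1) * e5
    · show w 2 = w 0 * 0; linear_combination e3
    · show w 3 = w 0 * 0; linear_combination e5
  · -- (3,6,7) → q6
    have hb : w 1 ≠ 0 := fun hb0 =>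
      hl3 ⟨by linear_combination e7 + (t - 2) * e3 - (t - 1) * e6 + (t - 2) * hb0, hb0⟩
    refine ⟨w 1, hb, Or.inr <| Or.inr <| Or.inr <| Or.inr <| Or.inr <| funext fun i => ?_⟩
    fin_cases i
    · show w 0 = w 1 * (t - 2); linear_combination e7 + (t - 2) * e3 - (t - 1) * e6
    · show w 1 = w 1 * 1; ring
    · show w 2 = w 1 * 0; linear_combination e3
    · show w 3 = w 1 * (-1); linear_combination e6 - e3
  · -- (4,5,6) → q3
    have ha : w 0 ≠ 0 := fun ha0 =>
      hl3 ⟨ha0, by linear_combination e4 - e6 - (t - 1) * e5 - ha0⟩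
    refine ⟨w 0, ha, Or.inr <| Or.inr <| Or.inl <| funext fun i => ?_⟩
    fin_cases i
    · show w 0 = w 0 * 1; ring
    · show w 1 = w 0 * (-1); linear_combination e4 - e6 - (t - 1) * e5
    · show w 2 = w 0 * 1; linear_combination 2 * e6 - e4 + (t - 2) * e5
    · show w 3 = w 0 * 0; linear_combination e5
  · -- (4,5,7) → q4
    have hb : w 1 = 0 := by linear_combination e4 - e7 - e5
    have ha : w 0 ≠ 0 := fun ha0 => hl3 ⟨ha0, hb⟩
    refine ⟨w 0, ha, Or.inr <| Or.inr <| Or.inr <| Or.inl <| funext fun i => ?_⟩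
    fin_cases i
    · show w 0 = w 0 * 1; ring
    · show w 1 = w 0 * 0; linear_combination e4 - e7 - e5
    · show w 2 = w 0 * (-1); linear_combination 2 * e7 - e4 + (2 - t) * e5
    · show w 3 = w 0 * 0; linear_combination e5
  · -- (4,6,7) → q6
    have hb : w 1 ≠ 0 := fun hb0 =>
      hl3 ⟨by linear_combination (2 - t) * e4 - e6 + (t - 1) * e7 + (t - 2) * hb0, hb0⟩
    refine ⟨w 1, hb, Or.inr <| Or.inr <| Or.inr <| Or.inr <| Or.inr <| funext fun i => ?_⟩
    fin_cases i
    · show w 0 = w 1 * (t - 2); linear_combination (2 - t) * e4 - e6 + (t - 1) * e7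
    · show w 1 = w 1 * 1; ring
    · show w 2 = w 1 * 0; linear_combination e6 - e4 + e7
    · show w 3 = w 1 * (-1); linear_combination e4 - e7
  · -- (5,6,7) → q1
    have ha : w 0 = 0 := by linear_combination e7 - e6 - (t - 2) * e5
    have hb : w 1 ≠ 0 := fun hb0 => hl3 ⟨ha, hb0⟩
    refine ⟨w 1, hb, Or.inl <| funext fun i => ?_⟩
    fin_cases i
    · show w 0 = w 1 * 0; linear_combination e7 - e6 - (t - 2) * e5
    · show w 1 = w 1 * 1; ring
    · show w 2 = w 1 * (-1); linear_combination e6 - e5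
    · show w 3 = w 1 * 0; linear_combination e5
  · -- (3,4,5) + extra : contradiction
    exfalso
    rcases hx with h0 | h1 | h2
    · have hb : w 1 = 0 := by
        have h2b : (2 : K) * w 1 = 0 := by linear_combination e4 - e3 - t * e5 - h0
        exact (mul_eq_zero.mp h2b).resolve_left two_ne_zero
      exact hl3 ⟨h0, hb⟩
    · exact hl3 ⟨by linear_combination e4 - e3 - t * e5 - 2 * h1, h1⟩
    · have hb : w 1 = 0 := by linear_combination e4 - e3 - t * e5 - h2
      exact hl3 ⟨by linear_combination h2 - hb, hb⟩

lemma octic_mem {K : Type*} [Field K] {t : K} {q : Fin 4 → K} (hq : q ≠ 0)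
    (hl3 : ¬(q 0 = 0 ∧ q 1 = 0)) (s : Finset (Fin 8)) (hs : 4 ≤ s.card)
    (hv : ∀ i ∈ s, octicForms K t i q = 0) :
    ¬((Projectivization.mk K q hq).rep 0 = 0 ∧ (Projectivization.mk K q hq).rep 1 = 0) ∧
    4 ≤ {i : Fin 8 | octicForms K t i (Projectivization.mk K q hq).rep = 0}.ncard := by
  obtain ⟨u, hu⟩ := (Projectivization.mk_eq_mk_iff K _ _
    (Projectivization.mk K q hq).rep_nonzero hq).mp (Projectivization.mk_rep _)
  have hrep : (Projectivization.mk K q hq).rep = (u : K) • q := by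
    rw [← hu]; rfl
  constructor
  · rintro ⟨h0, h1⟩
    rw [hrep] at h0 h1
    exact hl3 ⟨(mul_eq_zero.mp h0).resolve_left u.ne_zero,
      (mul_eq_zero.mp h1).resolve_left u.ne_zero⟩
  · have hsub : (↑s : Set (Fin 8)) ⊆
        {i : Fin 8 | octicForms K t i (Projectivization.mk K q hq).rep = 0} := by
      intro i hi
      show octicForms K t i (Projectivization.mk K q hq).rep = 0
      rw [hrep, octic_smul, hv i hi, mul_zero]
    calc (4 : ℕ) ≤ s.card := hs
      _ = (↑s : Set (Fin 8)).ncard := (Set.ncard_coe_finset s).symm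
      _ ≤ _ := Set.ncard_le_ncard hsub (Set.toFinite _)

lemma mkne {K : Type*} [Field K] {q r : Fin 4 → K} (hq : q ≠ 0) (hr : r ≠ 0) (k : Fin 4)
    (h1 : q k = 0) (h2 : r k ≠ 0) :
    Projectivization.mk K q hq ≠ Projectivization.mk K r hr := by
  intro h
  obtain ⟨u, hu⟩ := (Projectivization.mk_eq_mk_iff K q r hq hr).mp h
  have h3 : (u : K) * r k = 0 := by
    have := congrFun hu k
    rw [show (u • r) k = (u : K) * r k from rfl] at this
    rw [this, h1]
  exact h2 ((mul_eq_zero.mp h3).resolve_left u.ne_zero)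

/-- Over an algebraically closed field of characteristic zero, for all but finitely
many `t` the set of points of `ℙ³(K)` not lying on the line `l₃ = {x = y = 0}` at
which at least four of the eight forms vanish has exactly six elements: for generic
`t` the arrangement has exactly six fourfold points off the triple line `l₃`. -/
theorem octic_six_fourfold_points_off_triple_line (K : Type*) [Field K] [IsAlgClosed K]
    [CharZero K] :
    ∃ S : Set K, S.Finite ∧ ∀ t : K, t ∉ S →
      {p : Projectivization K (Fin 4 → K) |
        ¬(p.rep 0 = 0 ∧ p.rep 1 = 0) ∧
        4 ≤ {i : Fin 8 | octicForms K t i p.rep = 0}.ncard}.ncard = 6 := by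
  refine ⟨∅, Set.finite_empty, fun t _ => ?_⟩
  have hq1 : (![0, 1, -1, 0] : Fin 4 → K) ≠ 0 := fun h => by simpa using congrFun h 1
  have hq2 : (![1, -1, 0, 0] : Fin 4 → K) ≠ 0 := fun h => by simpa using congrFun h 0
  have hq3 : (![1, -1, 1, 0] : Fin 4 → K) ≠ 0 := fun h => by simpa using congrFun h 0
  have hq4 : (![1, 0, -1, 0] : Fin 4 → K) ≠ 0 := fun h => by simpa using congrFun h 0
  have hq5 : (![1, 0, 0, 0] : Fin 4 → K) ≠ 0 := fun h => by simpa using congrFun h 0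
  have hq6 : (![t - 2, 1, 0, -1] : Fin 4 → K) ≠ 0 := fun h => by simpa using congrFun h 1
  set x1 := Projectivization.mk K ![0, 1, -1, 0] hq1 with hx1
  set x2 := Projectivization.mk K ![1, -1, 0, 0] hq2 with hx2
  set x3 := Projectivization.mk K ![1, -1, 1, 0] hq3 with hx3
  set x4 := Projectivization.mk K ![1, 0, -1, 0] hq4 with hx4
  set x5 := Projectivization.mk K ![1, 0, 0, 0] hq5 with hx5
  set x6 := Projectivization.mk K ![t - 2, 1, 0, -1] hq6 with hx6
  have hset : {p : Projectivization K (Fin 4 → K) |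
      ¬(p.rep 0 = 0 ∧ p.rep 1 = 0) ∧
      4 ≤ {i : Fin 8 | octicForms K t i p.rep = 0}.ncard} =
      {x1, x2, x3, x4, x5, x6} := by
    ext p
    simp only [Set.mem_setOf_eq, Set.mem_insert_iff, Set.mem_singleton_iff]
    constructor
    · rintro ⟨hl3, h4⟩
      obtain ⟨c, hc, hcase⟩ := octic_forward hl3 h4
      have hmk : ∀ (q : Fin 4 → K) (hq : q ≠ 0), p.rep = c • q →
          p = Projectivization.mk K q hq := by
        intro q hq h
        rw [← p.mk_rep]
        exact (Projectivization.mk_eq_mk_iff K _ _ p.rep_nonzero hq).mpr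
          ⟨Units.mk0 c hc, h.symm⟩
      rcases hcase with h | h | h | h | h | h
      · exact Or.inl (hmk _ hq1 h)
      · exact Or.inr <| Or.inl (hmk _ hq2 h)
      · exact Or.inr <| Or.inr <| Or.inl (hmk _ hq3 h)
      · exact Or.inr <| Or.inr <| Or.inr <| Or.inl (hmk _ hq4 h)
      · exact Or.inr <| Or.inr <| Or.inr <| Or.inr <| Or.inl (hmk _ hq5 h)
      · exact Or.inr <| Or.inr <| Or.inr <| Or.inr <| Or.inr (hmk _ hq6 h)
    · rintro (rfl | rfl | rfl | rfl | rfl | rfl)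
      · refine octic_mem hq1 (by norm_num) {0, 5, 6, 7} (by decide) ?_
        intro i hi
        simp only [Finset.mem_insert, Finset.mem_singleton] at hi
        rcases hi with rfl | rfl | rfl | rfl
        · rfl
        · rfl
        · show (1 : K) + -1 + 0 = 0; ring
        · show (0 : K) + 1 + -1 + (t - 1) * 0 = 0; ring
      · refine octic_mem hq2 (by norm_num) {2, 3, 5, 7} (by decide) ?_
        intro i hi
        simp only [Finset.mem_insert, Finset.mem_singleton] at hi
        rcases hi with rfl | rfl | rfl | rfl
        · show (1 : K) + -1 = 0; ring
        · rfl
        · rfl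
        · show (1 : K) + -1 + 0 + (t - 1) * 0 = 0; ring
      · refine octic_mem hq3 (by norm_num) {2, 4, 5, 6} (by decide) ?_
        intro i hi
        simp only [Finset.mem_insert, Finset.mem_singleton] at hi
        rcases hi with rfl | rfl | rfl | rfl
        · show (1 : K) + -1 = 0; ring
        · show (1 : K) + 2 * -1 + 1 + t * 0 = 0; ring
        · rfl
        · show (-1 : K) + 1 + 0 = 0; ring
      · refine octic_mem hq4 (by norm_num) {1, 4, 5, 7} (by decide) ?_
        intro i hi
        simp only [Finset.mem_insert, Finset.mem_singleton] at hi
        rcases hi with rfl | rfl | rfl | rfl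
        · rfl
        · show (1 : K) + 2 * 0 + -1 + t * 0 = 0; ring
        · rfl
        · show (1 : K) + 0 + -1 + (t - 1) * 0 = 0; ring
      · refine octic_mem hq5 (by norm_num) {1, 3, 5, 6} (by decide) ?_
        intro i hi
        simp only [Finset.mem_insert, Finset.mem_singleton] at hi
        rcases hi with rfl | rfl | rfl | rfl
        · rfl
        · rfl
        · rfl
        · show (0 : K) + 0 + 0 = 0; ring
      · refine octic_mem hq6 (by norm_num) {3, 4, 6, 7} (by decide) ?_
        intro i hi
        simp only [Finset.mem_insert, Finset.mem_singleton] at hi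
        rcases hi with rfl | rfl | rfl | rfl
        · rfl
        · show (t - 2 : K) + 2 * 1 + 0 + t * -1 = 0; ring
        · show (1 : K) + 0 + -1 = 0; ring
        · show (t - 2 : K) + 1 + 0 + (t - 1) * -1 = 0; ring
  have hne12 : x1 ≠ x2 := mkne hq1 hq2 0 rfl (by norm_num)
  have hne13 : x1 ≠ x3 := mkne hq1 hq3 0 rfl (by norm_num)
  have hne14 : x1 ≠ x4 := mkne hq1 hq4 0 rfl (by norm_num)
  have hne15 : x1 ≠ x5 := mkne hq1 hq5 0 rfl (by norm_num)
  have hne16 : x1 ≠ x6 := mkne hq1 hq6 3 rfl (show (-1 : K) ≠ 0 by norm_num)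
  have hne23 : x2 ≠ x3 := mkne hq2 hq3 2 rfl (show (1 : K) ≠ 0 by norm_num)
  have hne24 : x2 ≠ x4 := (mkne hq4 hq2 1 rfl (by norm_num)).symm
  have hne25 : x2 ≠ x5 := (mkne hq5 hq2 1 rfl (by norm_num)).symm
  have hne26 : x2 ≠ x6 := mkne hq2 hq6 3 rfl (show (-1 : K) ≠ 0 by norm_num)
  have hne34 : x3 ≠ x4 := (mkne hq4 hq3 1 rfl (by norm_num)).symm
  have hne35 : x3 ≠ x5 := (mkne hq5 hq3 1 rfl (by norm_num)).symm
  have hne36 : x3 ≠ x6 := mkne hq3 hq6 3 rfl (show (-1 : K) ≠ 0 by norm_num)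
  have hne45 : x4 ≠ x5 := (mkne hq5 hq4 2 rfl (show (-1 : K) ≠ 0 by norm_num)).symm
  have hne46 : x4 ≠ x6 := mkne hq4 hq6 3 rfl (show (-1 : K) ≠ 0 by norm_num)
  have hne56 : x5 ≠ x6 := mkne hq5 hq6 3 rfl (show (-1 : K) ≠ 0 by norm_num)
  rw [hset]
  rw [Set.ncard_insert_of_notMem (by
    simp only [Set.mem_insert_iff, Set.mem_singleton_iff]
    push_neg
    exact ⟨hne12, hne13, hne14, hne15, hne16⟩) (Set.toFinite _)]
  rw [Set.ncard_insert_of_notMem (by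
    simp only [Set.mem_insert_iff, Set.mem_singleton_iff]
    push_neg
    exact ⟨hne23, hne24, hne25, hne26⟩) (Set.toFinite _)]
  rw [Set.ncard_insert_of_notMem (by
    simp only [Set.mem_insert_iff, Set.mem_singleton_iff]
    push_neg
    exact ⟨hne34, hne35, hne36⟩) (Set.toFinite _)]
  rw [Set.ncard_insert_of_notMem (by
    simp only [Set.mem_insert_iff, Set.mem_singleton_iff]
    push_neg
    exact ⟨hne45, hne46⟩) (Set.toFinite _)]
  rw [Set.ncard_insert_of_notMem (by simpa using hne56) (Set.toFinite _)]
  rw [Set.ncard_singleton]
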